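/- Multiplicities for the trapeze T_θ: let θ ∈ (0, π/2) and let ℓ_1 = 2cos θ, ℓ_2 = ℓ_4 = 1/cos θ, ℓ_3 = 2 tan θ sin θ. For λ ∈ ℝ let S(λ) be the linear space of pairs (α, β) ∈ ℝ⁴ × ℝ⁴ satisfying, cyclically in i (indices mod 4), α_{i+1} = α_i + β_i and λ α_i = β_{i−1}/ℓ_{i−1} − β_i/ℓ_i. Then S(2cos θ) has dimension 2 (the first nonzero eigenvalue of T_θ is double) and S(1/(cos θ sin² θ)) has dimension 1 (the second nonzero eigenvalue is simple). -/

import Mathlib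

open scoped Real

noncomputable section

/-- The side lengths of the trapeze `T_θ` with vertices
`A₁ = (cos θ, sin θ)`, `A₂ = (−cos θ, sin θ)`, `A₃ = (−tan θ sin θ, −sin θ)`,
`A₄ = (tan θ sin θ, −sin θ)`: `ℓ₁ = 2 cos θ`, `ℓ₂ = ℓ₄ = 1/cos θ`, `ℓ₃ = 2 tan θ sin θ`.
The index `i ∈ ZMod 4` labels the side `[Aᵢ, Aᵢ₊₁]` (with `0 = 4`). -/
def trapezeLen (θ : ℝ) : ZMod 4 → ℝ := fun i =>
  if i = 1 then 2 * Real.cos θ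
  else if i = 2 then 1 / Real.cos θ
  else if i = 3 then 2 * Real.tan θ * Real.sin θ
  else 1 / Real.cos θ

/-- The space `S(λ)` of pairs `(α, β)` satisfying, cyclically mod 4, `αᵢ₊₁ = αᵢ + βᵢ` and
`λ αᵢ = βᵢ₋₁/ℓᵢ₋₁ − βᵢ/ℓᵢ` for the side lengths of the trapeze `T_θ`: the space of
piecewise-affine eigenfunctions of `T_θ` for `λ`. -/
def trapezeEigenspace (θ lam : ℝ) : Submodule ℝ ((ZMod 4 → ℝ) × (ZMod 4 → ℝ)) where
  carrier := { p | ∀ i, p.1 (i + 1) = p.1 i + p.2 i ∧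
    lam * p.1 i = p.2 (i - 1) / trapezeLen θ (i - 1) - p.2 i / trapezeLen θ i }
  add_mem' := by
    intro p q hp hq i
    obtain ⟨h1, h2⟩ := hp i
    obtain ⟨h3, h4⟩ := hq i
    refine ⟨?_, ?_⟩
    · simp only [Prod.fst_add, Prod.snd_add, Pi.add_apply, h1, h3]; ring
    · simp only [Prod.fst_add, Prod.snd_add, Pi.add_apply, mul_add, h2, h4, add_div]; ring
  zero_mem' := by intro i; simp
  smul_mem' := by
    intro c p hp i
    obtain ⟨h1, h2⟩ := hp i
    refine ⟨?_, ?_⟩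
    · simp only [Prod.smul_fst, Prod.smul_snd, Pi.smul_apply, smul_eq_mul, h1]; ring
    · simp only [Prod.smul_fst, Prod.smul_snd, Pi.smul_apply, smul_eq_mul]
      rw [mul_comm lam (c * p.1 i), mul_assoc, mul_comm (p.1 i) lam, h2]
      ring

/-- auxiliary vector constructor -/
def zvec (a b c d : ℝ) : ZMod 4 → ℝ := ![a, b, c, d]
@[simp] lemma zvec0 (a b c d : ℝ) : zvec a b c d 0 = a := rfl
@[simp] lemma zvec1 (a b c d : ℝ) : zvec a b c d 1 = b := rfl
@[simp] lemma zvec2 (a b c d : ℝ) : zvec a b c d 2 = c := rfl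
@[simp] lemma zvec3 (a b c d : ℝ) : zvec a b c d 3 = d := rfl

lemma mem_tE {θ lam : ℝ} {p : (ZMod 4 → ℝ) × (ZMod 4 → ℝ)} :
    p ∈ trapezeEigenspace θ lam ↔ ∀ i : ZMod 4, p.1 (i + 1) = p.1 i + p.2 i ∧
    lam * p.1 i = p.2 (i - 1) / trapezeLen θ (i - 1) - p.2 i / trapezeLen θ i := Iff.rfl

lemma zmod4_cases : ∀ i : ZMod 4, i = 0 ∨ i = 1 ∨ i = 2 ∨ i = 3 := by decide


set_option maxHeartbeats 2000000 in
/-- **Multiplicities of the nonzero eigenvalues of the trapeze `T_θ`**: for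
`θ ∈ (0, π/2)`, the first nonzero eigenvalue `2 cos θ` is double and the second one
`1/(cos θ sin² θ)` is simple. -/
theorem trapeze_eigenvalue_multiplicities (θ : ℝ) (hθ : θ ∈ Set.Ioo 0 (π / 2)) :
    Module.finrank ℝ ↥(trapezeEigenspace θ (2 * Real.cos θ)) = 2 ∧
      Module.finrank ℝ ↥(trapezeEigenspace θ (1 / (Real.cos θ * Real.sin θ ^ 2))) = 1 := by
  obtain ⟨hθ0, hθ1⟩ := hθ
  have hcpos : 0 < Real.cos θ := Real.cos_pos_of_mem_Ioo
    ⟨by linarith [Real.pi_pos], hθ1⟩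
  have hspos : 0 < Real.sin θ := Real.sin_pos_of_pos_of_lt_pi hθ0
    (by linarith [Real.pi_pos])
  set c := Real.cos θ with hcdef
  have hc : c ≠ 0 := ne_of_gt hcpos
  have hs2 : Real.sin θ ^ 2 = 1 - c ^ 2 := by
    rw [hcdef]; nlinarith [Real.sin_sq_add_cos_sq θ]
  have h1c : (1 : ℝ) - c ^ 2 ≠ 0 := by rw [← hs2]; positivity
  have l0 : trapezeLen θ 0 = 1 / c := rfl
  have l1 : trapezeLen θ 1 = 2 * c := rfl
  have l2 : trapezeLen θ 2 = 1 / c := rfl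
  have l3 : trapezeLen θ 3 = 2 * (1 - c ^ 2) / c := by
    show 2 * Real.tan θ * Real.sin θ = _
    rw [Real.tan_eq_sin_div_cos, show (1:ℝ) - c ^ 2 = Real.sin θ ^ 2 from hs2.symm, ← hcdef]
    field_simp
  constructor
  · -- first eigenvalue 2c, multiplicity 2
    set v1 : (ZMod 4 → ℝ) × (ZMod 4 → ℝ) :=
      (zvec (2*c^2-2) (1-2*c^2) 1 0, zvec (3-4*c^2) (2*c^2) (-1) (2*c^2-2)) with hv1
    set v2 : (ZMod 4 → ℝ) × (ZMod 4 → ℝ) :=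
      (zvec (2*c^2-1) (-(2*c^2)) 0 1, zvec (1-4*c^2) (2*c^2) 1 (2*c^2-2)) with hv2
    have heq : trapezeEigenspace θ (2 * c) = Submodule.span ℝ {v1, v2} := by
      apply le_antisymm
      · intro p hp
        rw [mem_tE] at hp
        obtain ⟨h1_0, h2_0⟩ := hp 0
        obtain ⟨h1_1, h2_1⟩ := hp 1
        obtain ⟨h1_2, h2_2⟩ := hp 2
        obtain ⟨h1_3, h2_3⟩ := hp 3
        simp only [show ((0:ZMod 4)+1) = 1 from rfl, show ((1:ZMod 4)+1) = 2 from rfl,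
          show ((2:ZMod 4)+1) = 3 from rfl, show ((3:ZMod 4)+1) = 0 from rfl,
          show ((0:ZMod 4)-1) = 3 from rfl, show ((1:ZMod 4)-1) = 0 from rfl,
          show ((2:ZMod 4)-1) = 1 from rfl, show ((3:ZMod 4)-1) = 2 from rfl,
          l0, l1, l2, l3] at h1_0 h1_1 h1_2 h1_3 h2_0 h2_1 h2_2 h2_3
        have hb0 : p.2 0 = p.1 1 - p.1 0 := by linarith
        have hb1 : p.2 1 = p.1 2 - p.1 1 := by linarith
        have hb2 : p.2 2 = p.1 3 - p.1 2 := by linarith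
        have hb3 : p.2 3 = p.1 0 - p.1 3 := by linarith
        rw [hb3, hb0] at h2_0
        rw [hb0, hb1] at h2_1
        rw [hb1, hb2] at h2_2
        rw [hb2, hb3] at h2_3
        field_simp at h2_0 h2_1 h2_2 h2_3
        have hS : p.1 0 + p.1 1 + p.1 2 + p.1 3 = 0 := by
          have h2cne : (2 * c * (1 - c^2)) ≠ 0 := by
            intro h; rcases mul_eq_zero.1 h with h' | h'
            · exact hc (by linarith [mul_eq_zero.1 h'])
            · exact h1c h'
          have := mul_left_cancel₀ h2cne (show (2 * c * (1 - c^2)) *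
              (p.1 0 + p.1 1 + p.1 2 + p.1 3) = (2 * c * (1 - c^2)) * 0 from by
            linear_combination c * (h2_0 + h2_3))
          linarith
        have hT0 : p.1 0 = (2*c^2-2) * p.1 2 + (2*c^2-1) * p.1 3 := by
          have := mul_left_cancel₀ hc (show c * p.1 0 =
              c * ((2*c^2-2) * p.1 2 + (2*c^2-1) * p.1 3) from by
            linear_combination (-c) * h2_0 + (2*c*(1-c^2)) * hS)
          exact this
        have hT1 : p.1 1 = (1-2*c^2) * p.1 2 - 2*c^2 * p.1 3 := by
          linear_combination (-1) * h2_1 + (2*c^2) * hS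
        rw [Submodule.mem_span_pair]
        refine ⟨p.1 2, p.1 3, ?_⟩
        apply Prod.ext <;> funext i <;>
          rcases zmod4_cases i with h | h | h | h <;> subst h <;>
          simp only [hv1, hv2, Prod.fst_add, Prod.snd_add, Prod.smul_fst, Prod.smul_snd,
            Pi.add_apply, Pi.smul_apply, smul_eq_mul, zvec0, zvec1, zvec2, zvec3]
        · linear_combination (-1) * hT0
        · linear_combination (-1) * hT1
        · ring
        · ring
        · linear_combination (-1) * hb0 - hT1 + hT0
        · linear_combination (-1) * hb1 + hT1
        · linear_combination (-1) * hb2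
        · linear_combination (-1) * hb3 - hT0
      · rw [Submodule.span_le]
        rintro x hx
        simp only [Set.mem_insert_iff, Set.mem_singleton_iff] at hx
        rcases hx with rfl | rfl <;>
        · rw [SetLike.mem_coe, mem_tE]
          intro i
          rcases zmod4_cases i with h | h | h | h <;> subst h <;>
            refine ⟨by simp only [hv1, hv2, show ((0:ZMod 4)+1) = 1 from rfl,
              show ((1:ZMod 4)+1) = 2 from rfl, show ((2:ZMod 4)+1) = 3 from rfl,
              show ((3:ZMod 4)+1) = 0 from rfl, zvec0, zvec1, zvec2, zvec3]; ring, ?_⟩ <;>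
            simp only [hv1, hv2, show ((0:ZMod 4)-1) = 3 from rfl,
              show ((1:ZMod 4)-1) = 0 from rfl, show ((2:ZMod 4)-1) = 1 from rfl,
              show ((3:ZMod 4)-1) = 2 from rfl, l0, l1, l2, l3,
              zvec0, zvec1, zvec2, zvec3] <;>
            field_simp <;> ring
    rw [heq]
    have hrange : ({v1, v2} : Set ((ZMod 4 → ℝ) × (ZMod 4 → ℝ))) = Set.range ![v1, v2] := by
      simp only [Matrix.range_cons, Matrix.range_empty, Set.union_empty,
        Set.union_singleton, Set.singleton_union]
      exact Set.pair_comm v1 v2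
    rw [hrange, finrank_span_eq_card]
    · simp
    · rw [linearIndependent_fin2]
      constructor
      · intro h
        have := congrFun (congrArg Prod.fst h) 3
        simp [hv2] at this
      · intro a h
        have h2 := congrFun (congrArg Prod.fst h) 2
        simp [hv1, hv2] at h2
  · -- second eigenvalue, multiplicity 1
    set v : (ZMod 4 → ℝ) × (ZMod 4 → ℝ) :=
      (zvec (-(c^2)) (1-c^2) (c^2-1) (c^2), zvec 1 (2*c^2-2) 1 (-(2*c^2))) with hv
    have heq : trapezeEigenspace θ (1 / (Real.cos θ * Real.sin θ ^ 2)) = Submodule.span ℝ {v} := by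
      apply le_antisymm
      · intro p hp
        rw [mem_tE] at hp
        obtain ⟨h1_0, h2_0⟩ := hp 0
        obtain ⟨h1_1, h2_1⟩ := hp 1
        obtain ⟨h1_2, h2_2⟩ := hp 2
        obtain ⟨h1_3, h2_3⟩ := hp 3
        simp only [show ((0:ZMod 4)+1) = 1 from rfl, show ((1:ZMod 4)+1) = 2 from rfl,
          show ((2:ZMod 4)+1) = 3 from rfl, show ((3:ZMod 4)+1) = 0 from rfl,
          show ((0:ZMod 4)-1) = 3 from rfl, show ((1:ZMod 4)-1) = 0 from rfl,
          show ((2:ZMod 4)-1) = 1 from rfl, show ((3:ZMod 4)-1) = 2 from rfl,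
          l0, l1, l2, l3, hs2, ← hcdef] at h1_0 h1_1 h1_2 h1_3 h2_0 h2_1 h2_2 h2_3
        have hb0 : p.2 0 = p.1 1 - p.1 0 := by linarith
        have hb1 : p.2 1 = p.1 2 - p.1 1 := by linarith
        have hb2 : p.2 2 = p.1 3 - p.1 2 := by linarith
        have hb3 : p.2 3 = p.1 0 - p.1 3 := by linarith
        rw [hb3, hb0] at h2_0
        rw [hb0, hb1] at h2_1
        rw [hb1, hb2] at h2_2
        rw [hb2, hb3] at h2_3
        field_simp at h2_0 h2_1 h2_2 h2_3
        have f0 : 2 * p.1 0 = (p.1 0 - p.1 3) * c^2 - 2*c^2*(1-c^2)*(p.1 1 - p.1 0) :=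
          mul_left_cancel₀ h1c (by linear_combination (1-c^2) * h2_0)
        have f1 : 2 * p.1 1 = 2*c^2*(1-c^2)*(p.1 1 - p.1 0) - (1-c^2)*(p.1 2 - p.1 1) :=
          mul_left_cancel₀ hc (by linear_combination c * h2_1)
        have f2 : 2 * p.1 2 = (1-c^2)*(p.1 2 - p.1 1) - 2*c^2*(1-c^2)*(p.1 3 - p.1 2) :=
          mul_left_cancel₀ hc (by linear_combination c * h2_2)
        have f3 : 2 * p.1 3 = 2*c^2*(1-c^2)*(p.1 3 - p.1 2) - (p.1 0 - p.1 3) * c^2 :=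
          mul_left_cancel₀ h1c (by linear_combination (1-c^2) * h2_3)
        have hsum : p.1 0 + p.1 1 + p.1 2 + p.1 3 = 0 := by
          linear_combination (1/2 : ℝ) * f0 + (1/2 : ℝ) * f1 + (1/2 : ℝ) * f2 + (1/2 : ℝ) * f3
        have hwne : (1 : ℝ) - 2*c^2*(1-c^2) ≠ 0 := by
          have h4 : (0:ℝ) < c^4 := by positivity
          nlinarith [sq_nonneg (1 - c^2)]
        have hwz : p.1 0 - p.1 1 - p.1 2 + p.1 3 = 0 := by
          have hw' : (1 - 2*c^2*(1-c^2)) * (p.1 0 - p.1 1 - p.1 2 + p.1 3) = 0 := by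
            linear_combination (1/2 : ℝ) * f0 - (1/2 : ℝ) * f1 - (1/2 : ℝ) * f2 + (1/2 : ℝ) * f3
          exact (mul_eq_zero.1 hw').resolve_left hwne
        have hu : p.1 0 + p.1 3 = 0 := by
          linear_combination (1/2 : ℝ) * f0 + (1/2 : ℝ) * f3 + (c^2*(1-c^2)) * hwz
        have hvv : p.1 1 + p.1 2 = 0 := by linarith
        have hq : (1-c^2) * p.1 0 + c^2 * p.1 1 = 0 :=
          mul_left_cancel₀ h1c (show (1-c^2) * ((1-c^2) * p.1 0 + c^2 * p.1 1) =
            (1-c^2) * 0 from by linear_combination (1/2 : ℝ) * f0 - (c^2/2) * hu)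
        have hT : c^2 * p.1 1 = (1-c^2) * p.1 3 := by
          linear_combination hq - (1-c^2) * hu
        rw [Submodule.mem_span_singleton]
        refine ⟨p.1 3 / c^2, ?_⟩
        apply Prod.ext <;> funext i <;>
          rcases zmod4_cases i with h | h | h | h <;> subst h <;>
          simp only [hv, Prod.smul_fst, Prod.smul_snd, Pi.smul_apply, smul_eq_mul,
            zvec0, zvec1, zvec2, zvec3] <;> field_simp
        · linear_combination (-1) * hu
        · linear_combination (-1) * hT
        · linear_combination hT - c^2 * hvv
        · linear_combination (-(c^2)) * hb0 + c^2 * hu - hT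
        · linear_combination (-(c^2)) * hb1 - c^2 * hvv + 2 * hT
        · linear_combination (-(c^2)) * hb2 + c^2 * hvv - hT
        · linear_combination (-1) * hb3 - hu
      · rw [Submodule.span_le, Set.singleton_subset_iff, SetLike.mem_coe, mem_tE]
        intro i
        rcases zmod4_cases i with h | h | h | h <;> subst h <;>
          refine ⟨by simp only [hv, show ((0:ZMod 4)+1) = 1 from rfl,
            show ((1:ZMod 4)+1) = 2 from rfl, show ((2:ZMod 4)+1) = 3 from rfl,
            show ((3:ZMod 4)+1) = 0 from rfl, zvec0, zvec1, zvec2, zvec3]; ring, ?_⟩ <;>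
          simp only [hv, show ((0:ZMod 4)-1) = 3 from rfl,
            show ((1:ZMod 4)-1) = 0 from rfl, show ((2:ZMod 4)-1) = 1 from rfl,
            show ((3:ZMod 4)-1) = 2 from rfl, l0, l1, l2, l3, hs2, ← hcdef,
            zvec0, zvec1, zvec2, zvec3] <;>
          field_simp <;> ring
    have hvne : v ≠ 0 := by
      intro h0
      have h3 := congrFun (congrArg Prod.fst h0) 3
      simp only [hv, zvec3, Prod.fst_zero, Pi.zero_apply]   at h3
      exact hc ((pow_eq_zero_iff two_ne_zero).1 h3)
    rw [heq]
    exact finrank_span_singleton hvne
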